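/- There exist constants C > 0 and ε₀ ∈ (0,1) such that for every 0 < ε < ε₀, the infimum m_ε of E_{ε,A} over Borel probability measures on S satisfies m_ε ≤ −(1/2)·e^{λ_1} + C·ε·log(1/ε). -/

import Mathlib

open MeasureTheory Real Filter Topology

noncomputable section

/-- The unit sphere `S = 𝕊^{d-1}` in `ℝ^d`. -/
abbrev Sph (d : ℕ) : Type := Metric.sphere (0 : EuclideanSpace ℝ (Fin d)) 1

variable {d : ℕ}

/-- The bilinear form `⟨x, A y⟩` for the diagonal matrix `A = diag lam`. -/
def qA (lam : Fin d → ℝ) (x y : EuclideanSpace ℝ (Fin d)) : ℝ :=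
  ∑ i, lam i * x i * y i

/-- The interaction kernel `K_A(x,y) = exp ⟨x, A y⟩`. -/
def Kker (lam : Fin d → ℝ) (x y : Sph d) : ℝ :=
  Real.exp (qA lam (x : EuclideanSpace ℝ (Fin d)) (y : EuclideanSpace ℝ (Fin d)))

/-- The interaction energy `I_A(μ)`. -/
def IA (lam : Fin d → ℝ) (μ : Measure (Sph d)) : ℝ :=
  ∫ x, ∫ y, Kker lam x y ∂μ ∂μ

/-- The potential `W_μ(x) = ∫ K_A(x,y) dμ(y)`. -/
def WA (lam : Fin d → ℝ) (μ : Measure (Sph d)) (x : Sph d) : ℝ :=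
  ∫ y, Kker lam x y ∂μ

open scoped Classical in
/-- Relative entropy of `μ` with respect to `ω`, with value `+∞` when `μ` is not
absolutely continuous w.r.t. `ω` or the entropy integral diverges. -/
def Ent (ω μ : Measure (Sph d)) : EReal :=
  if μ ≪ ω ∧ Integrable (fun x => Real.log (μ.rnDeriv ω x).toReal) μ
  then ((∫ x, Real.log (μ.rnDeriv ω x).toReal ∂μ : ℝ) : EReal)
  else ⊤

/-- The free energy `E_{ε,A}(μ) = ε·Ent(μ) − (1/2)·I_A(μ)`. -/
def EA (lam : Fin d → ℝ) (ω : Measure (Sph d)) (ε : ℝ) (μ : Measure (Sph d)) : EReal :=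
  (ε : EReal) * Ent ω μ - ((IA lam μ / 2 : ℝ) : EReal)

/-- The antipodal map on the sphere. -/
def antip (x : Sph d) : Sph d :=
  ⟨-(x : EuclideanSpace ℝ (Fin d)), by
    have hx := x.2
    rw [mem_sphere_zero_iff_norm] at hx ⊢
    rwa [norm_neg]⟩

/-- The sphere self-map induced by a linear isometry equivalence of `ℝ^d`. -/
def sphMap (g : EuclideanSpace ℝ (Fin d) ≃ₗᵢ[ℝ] EuclideanSpace ℝ (Fin d)) (x : Sph d) : Sph d :=
  ⟨g (x : EuclideanSpace ℝ (Fin d)), by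
    have hx := x.2
    rw [mem_sphere_zero_iff_norm] at hx ⊢
    rwa [g.norm_map]⟩

/-- `ω` is the uniform probability measure on the sphere, characterised as a
rotation-invariant Borel probability measure. -/
def IsUniform (ω : Measure (Sph d)) : Prop :=
  IsProbabilityMeasure ω ∧
  ∀ g : EuclideanSpace ℝ (Fin d) ≃ₗᵢ[ℝ] EuclideanSpace ℝ (Fin d),
    Measure.map (sphMap g) ω = ω

/-- The (topological) support of a measure. -/
def msupport (μ : Measure (Sph d)) : Set (Sph d) :=
  {x | ∀ U : Set (Sph d), IsOpen U → x ∈ U → 0 < μ U}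

/-- The set of global maximizers of the potential `W_ν`. -/
def argmaxW (lam : Fin d → ℝ) (ν : Measure (Sph d)) : Set (Sph d) :=
  {x | ∀ y, WA lam ν y ≤ WA lam ν x}

/-- `μ` is a Gibbs critical point of `E_{ε,A}`. -/
def IsGibbs (lam : Fin d → ℝ) (ω : Measure (Sph d)) (ε : ℝ) (μ : Measure (Sph d)) : Prop :=
  IsProbabilityMeasure μ ∧
  μ = ω.withDensity (fun x => ENNReal.ofReal
    (Real.exp (WA lam μ x / ε) / ∫ z, Real.exp (WA lam μ z / ε) ∂ω))

/-- `μ` is a global minimizer of `E_{ε,A}` over Borel probability measures. -/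
def IsMinimizer (lam : Fin d → ℝ) (ω : Measure (Sph d)) (ε : ℝ) (μ : Measure (Sph d)) : Prop :=
  IsProbabilityMeasure μ ∧
  ∀ ν : Measure (Sph d), IsProbabilityMeasure ν → EA lam ω ε μ ≤ EA lam ω ε ν

/-- `m_ε`, the infimum of the free energy over probability measures. -/
def mEps (lam : Fin d → ℝ) (ω : Measure (Sph d)) (ε : ℝ) : EReal :=
  sInf {r : EReal | ∃ μ : Measure (Sph d), IsProbabilityMeasure μ ∧ EA lam ω ε μ = r}


section MyAux
open scoped ENNReal NNReal

variable {d : ℕ}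

lemma myabs_apply_le_norm (u : EuclideanSpace ℝ (Fin d)) (i : Fin d) : |u i| ≤ ‖u‖ := by
  rw [EuclideanSpace.norm_eq]
  have h1 : |u i| = Real.sqrt (|u i| ^ 2) := by
    rw [Real.sqrt_sq (abs_nonneg _)]
  rw [h1]
  apply Real.sqrt_le_sqrt
  have : |u i| ^ 2 = ‖u i‖ ^ 2 := by rw [Real.norm_eq_abs]
  rw [this]
  exact Finset.single_le_sum (f := fun j => ‖u j‖ ^ 2) (fun j _ => by positivity) (Finset.mem_univ i)

lemma mysum_abs_mul_le (u v : EuclideanSpace ℝ (Fin d)) :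
    ∑ i, |u i| * |v i| ≤ ‖u‖ * ‖v‖ := by
  have hcs := Finset.sum_mul_sq_le_sq_mul_sq Finset.univ (fun i => |u i|) (fun i => |v i|)
  have hu : ∑ i, |u i| ^ 2 = ‖u‖ ^ 2 := by
    rw [EuclideanSpace.norm_eq, Real.sq_sqrt (by positivity)]
    simp [Real.norm_eq_abs]
  have hv : ∑ i, |v i| ^ 2 = ‖v‖ ^ 2 := by
    rw [EuclideanSpace.norm_eq, Real.sq_sqrt (by positivity)]
    simp [Real.norm_eq_abs]
  have hS : (0:ℝ) ≤ ∑ i, |u i| * |v i| := Finset.sum_nonneg fun i _ => by positivity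
  nlinarith [norm_nonneg u, norm_nonneg v, mul_nonneg (norm_nonneg u) (norm_nonneg v)]

lemma myabs_qA_le {lam : Fin d → ℝ} {Λ : ℝ} (hΛ0 : 0 ≤ Λ) (hΛ : ∀ i, |lam i| ≤ Λ)
    (u v : EuclideanSpace ℝ (Fin d)) : |qA lam u v| ≤ Λ * (‖u‖ * ‖v‖) := by
  have h1 : |qA lam u v| ≤ ∑ i, Λ * (|u i| * |v i|) := by
    refine le_trans (Finset.abs_sum_le_sum_abs _ _) (Finset.sum_le_sum fun i _ => ?_)
    rw [abs_mul, abs_mul, mul_assoc]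
    exact mul_le_mul_of_nonneg_right (hΛ i) (mul_nonneg (abs_nonneg _) (abs_nonneg _))
  rw [← Finset.mul_sum] at h1
  exact h1.trans (mul_le_mul_of_nonneg_left (mysum_abs_mul_le u v) hΛ0)

lemma mycontinuous_sphMap (g : EuclideanSpace ℝ (Fin d) ≃ₗᵢ[ℝ] EuclideanSpace ℝ (Fin d)) :
    Continuous (sphMap g) :=
  Continuous.subtype_mk (g.continuous.comp continuous_subtype_val) _

lemma mycontinuous_Kker (lam : Fin d → ℝ) :
    Continuous (fun p : Sph d × Sph d => Kker lam p.1 p.2) := by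
  apply Real.continuous_exp.comp
  unfold qA
  apply continuous_finset_sum
  intro i _
  have hc : ∀ (f : Sph d × Sph d → Sph d), Continuous f →
      Continuous (fun p => ((f p : EuclideanSpace ℝ (Fin d)) i)) := by
    intro f hf
    exact (EuclideanSpace.proj (𝕜 := ℝ) i).continuous.comp (continuous_subtype_val.comp hf)
  exact ((continuous_const.mul (hc Prod.fst continuous_fst)).mul (hc Prod.snd continuous_snd))

/-- all caps of the same radius have the same measure. -/
lemma mycap_eq {ω : Measure (Sph d)} (hω : IsUniform ω) (p q : Sph d) (r : ℝ) :
    ω (Metric.closedBall p r) = ω (Metric.closedBall q r) := by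
  have hnorm : ‖(p : EuclideanSpace ℝ (Fin d))‖ = ‖(q : EuclideanSpace ℝ (Fin d))‖ := by
    have hp := p.2; have hq := q.2
    rw [mem_sphere_zero_iff_norm] at hp hq
    rw [hp, hq]
  set g := Submodule.reflection (Submodule.span ℝ {(p : EuclideanSpace ℝ (Fin d)) - q})ᗮ with hg
  have hgp : g (p : EuclideanSpace ℝ (Fin d)) = q := Submodule.reflection_sub hnorm
  have hmeas : Measurable (sphMap g) := (mycontinuous_sphMap g).measurable
  have hmb : MeasurableSet (Metric.closedBall q r) := Metric.isClosed_closedBall.measurableSet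
  have hmap := hω.2 g
  have : ω (Metric.closedBall q r) = ω (sphMap g ⁻¹' Metric.closedBall q r) := by
    conv_lhs => rw [← hmap]
    rw [Measure.map_apply hmeas hmb]
  rw [this]
  congr 1
  ext x
  simp only [Set.mem_preimage, Metric.mem_closedBall, Subtype.dist_eq, sphMap]
  rw [dist_eq_norm, dist_eq_norm, ← hgp, ← map_sub, g.norm_map]

/-- pigeonhole lower bound for cap measures. -/
lemma mycap_lb (hd : 0 < d) {ω : Measure (Sph d)} (hω : IsUniform ω) (p : Sph d)
    {r : ℝ} (hr : 0 < r) :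
    ((((2 * ⌈(d : ℝ) / r⌉₊ + 1) ^ d : ℕ) : ℝ≥0∞))⁻¹ ≤ ω (Metric.closedBall p r) := by
  haveI := hω.1
  set N : ℕ := ⌈(d : ℝ) / r⌉₊ with hN
  set s : ℝ := r / d with hs
  have hdR : (0:ℝ) < d := by exact_mod_cast hd
  have hspos : 0 < s := div_pos hr hdR
  set φ : Sph d → (Fin d → ℤ) := fun x i => ⌊((x : EuclideanSpace ℝ (Fin d)) i) / s⌋ with hφ
  have hφmeas : Measurable φ := by
    apply measurable_pi_lambda
    intro i
    exact Int.measurable_floor.comp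
      (((EuclideanSpace.proj (𝕜 := ℝ) i).continuous.comp
        continuous_subtype_val).measurable.div_const s)
  set F : Finset (Fin d → ℤ) := Fintype.piFinset (fun _ => Finset.Icc (-(N:ℤ)) N) with hF
  have hrange : ∀ x : Sph d, φ x ∈ F := by
    intro x
    rw [Fintype.mem_piFinset]
    intro i
    have hxi : |((x : EuclideanSpace ℝ (Fin d)) i)| ≤ 1 := by
      have h1 := myabs_apply_le_norm (x : EuclideanSpace ℝ (Fin d)) i
      have hx := x.2; rw [mem_sphere_zero_iff_norm] at hx
      rwa [hx] at h1
    have hds : (d:ℝ)/r ≤ N := Nat.le_ceil _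
    have hb : |((x : EuclideanSpace ℝ (Fin d)) i) / s| ≤ (N:ℝ) := by
      rw [abs_div, abs_of_pos hspos, div_le_iff₀ hspos]
      calc |((x : EuclideanSpace ℝ (Fin d)) i)| ≤ 1 := hxi
        _ = ((d:ℝ)/r) * s := by rw [hs]; field_simp
        _ ≤ (N:ℝ) * s := by
            exact mul_le_mul_of_nonneg_right hds hspos.le
    rw [abs_le] at hb
    rw [Finset.mem_Icc]
    constructor
    · rw [Int.le_floor]
      push_cast
      exact hb.1
    · have h2 := Int.floor_le_floor hb.2
      rw [Int.floor_natCast] at h2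
      exact_mod_cast h2
  have hFne : F.Nonempty := ⟨fun _ => 0, by
    rw [Fintype.mem_piFinset]; intro i; rw [Finset.mem_Icc]
    constructor <;> simp⟩
  have hcard : F.card = (2 * N + 1) ^ d := by
    rw [hF, Fintype.card_piFinset]
    have : (Finset.Icc (-(N:ℤ)) N).card = 2 * N + 1 := by
      rw [Int.card_Icc]; omega
    simp [this]
  have hcover : (1 : ℝ≥0∞) ≤ ∑ v ∈ F, ω (φ ⁻¹' {v}) := by
    have h1 : ω Set.univ = 1 := measure_univ
    have h2 : (Set.univ : Set (Sph d)) ⊆ ⋃ v ∈ F, φ ⁻¹' {v} := by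
      intro x _
      exact Set.mem_biUnion (hrange x) rfl
    calc (1:ℝ≥0∞) = ω Set.univ := h1.symm
      _ ≤ ω (⋃ v ∈ F, φ ⁻¹' {v}) := measure_mono h2
      _ ≤ ∑ v ∈ F, ω (φ ⁻¹' {v}) := measure_biUnion_finset_le _ _
  obtain ⟨v, hvF, hvmax⟩ := Finset.exists_max_image F (fun v => ω (φ ⁻¹' {v})) hFne
  set M := ω (φ ⁻¹' {v}) with hM
  have hcard0 : ((2 * N + 1) ^ d : ℕ) ≠ 0 := by positivity
  have h3 : (1 : ℝ≥0∞) ≤ (((2 * N + 1) ^ d : ℕ) : ℝ≥0∞) * M := by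
    calc (1:ℝ≥0∞) ≤ ∑ v ∈ F, ω (φ ⁻¹' {v}) := hcover
      _ ≤ F.card • M := Finset.sum_le_card_nsmul _ _ _ (fun x hx => hvmax x hx)
      _ = (((2 * N + 1) ^ d : ℕ) : ℝ≥0∞) * M := by rw [nsmul_eq_mul, hcard]
  have hκM : ((((2 * N + 1) ^ d : ℕ) : ℝ≥0∞))⁻¹ ≤ M := by
    calc ((((2 * N + 1) ^ d : ℕ) : ℝ≥0∞))⁻¹
        = ((((2 * N + 1) ^ d : ℕ) : ℝ≥0∞))⁻¹ * 1 := (mul_one _).symm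
      _ ≤ ((((2 * N + 1) ^ d : ℕ) : ℝ≥0∞))⁻¹ * ((((2 * N + 1) ^ d : ℕ) : ℝ≥0∞) * M) := by
          exact mul_le_mul_right h3 _
      _ = (((((2 * N + 1) ^ d : ℕ) : ℝ≥0∞))⁻¹ * (((2 * N + 1) ^ d : ℕ) : ℝ≥0∞)) * M := by
          rw [mul_assoc]
      _ = M := by
          rw [ENNReal.inv_mul_cancel (by exact_mod_cast hcard0) (ENNReal.natCast_ne_top _), one_mul]
  have hMne : M ≠ 0 := by
    intro h0
    rw [h0, le_zero_iff] at hκM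
    exact (ENNReal.inv_ne_zero.mpr (ENNReal.natCast_ne_top _)) hκM
  have hfibne : (φ ⁻¹' {v}).Nonempty := nonempty_of_measure_ne_zero hMne
  obtain ⟨q, hq⟩ := hfibne
  have hsub : φ ⁻¹' {v} ⊆ Metric.closedBall q r := by
    intro x hx
    have hφeq : φ x = φ q := by
      rw [Set.mem_preimage, Set.mem_singleton_iff] at hx hq
      rw [hx, hq]
    rw [Metric.mem_closedBall, Subtype.dist_eq, EuclideanSpace.dist_eq]
    have hcoord : ∀ i, dist ((x : EuclideanSpace ℝ (Fin d)) i) ((q : EuclideanSpace ℝ (Fin d)) i) ^ 2 ≤ s ^ 2 := by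
      intro i
      have hfl : ⌊((x : EuclideanSpace ℝ (Fin d)) i) / s⌋ = ⌊((q : EuclideanSpace ℝ (Fin d)) i) / s⌋ :=
        congrFun hφeq i
      have h4 := Int.abs_sub_lt_one_of_floor_eq_floor hfl
      rw [div_sub_div_same, abs_div, abs_of_pos hspos, div_lt_one hspos] at h4
      rw [Real.dist_eq]
      have h5 : |((x : EuclideanSpace ℝ (Fin d)) i) - ((q : EuclideanSpace ℝ (Fin d)) i)| ≤ s := h4.le
      nlinarith [abs_nonneg (((x : EuclideanSpace ℝ (Fin d)) i) - ((q : EuclideanSpace ℝ (Fin d)) i))]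
    have hsum : ∑ i, dist ((x : EuclideanSpace ℝ (Fin d)) i) ((q : EuclideanSpace ℝ (Fin d)) i) ^ 2 ≤ r ^ 2 := by
      calc ∑ i, dist ((x : EuclideanSpace ℝ (Fin d)) i) ((q : EuclideanSpace ℝ (Fin d)) i) ^ 2
          ≤ ∑ _i : Fin d, s ^ 2 := Finset.sum_le_sum (fun i _ => hcoord i)
        _ = d * s ^ 2 := by rw [Finset.sum_const, Finset.card_univ, Fintype.card_fin, nsmul_eq_mul]
        _ ≤ r ^ 2 := by
            rw [hs, div_pow]
            have h7 : (1:ℝ) ≤ (d:ℝ) := by exact_mod_cast hd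
            have h8 : (d:ℝ) * (r ^ 2 / (d:ℝ) ^ 2) = r ^ 2 / d := by
              field_simp
            rw [h8]
            exact div_le_self (by positivity) h7
    calc Real.sqrt (∑ i, dist ((x : EuclideanSpace ℝ (Fin d)) i) ((q : EuclideanSpace ℝ (Fin d)) i) ^ 2)
        ≤ Real.sqrt (r ^ 2) := Real.sqrt_le_sqrt hsum
      _ = r := Real.sqrt_sq hr.le
  calc ((((2 * N + 1) ^ d : ℕ) : ℝ≥0∞))⁻¹ ≤ M := hκM
    _ ≤ ω (Metric.closedBall q r) := measure_mono hsub
    _ = ω (Metric.closedBall p r) := mycap_eq hω q p r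

variable {ω : Measure (Sph d)} {cap : Set (Sph d)}

/-- the normalized restriction of `ω` to `cap`. -/
def myCapMeas (ω : Measure (Sph d)) (cap : Set (Sph d)) : Measure (Sph d) :=
  ω.withDensity (cap.indicator fun _ => (ω cap)⁻¹)

lemma myCapMeas_eq (hcap : MeasurableSet cap) :
    myCapMeas ω cap = (ω cap)⁻¹ • ω.restrict cap := by
  rw [myCapMeas, withDensity_indicator hcap, withDensity_const]

lemma myCapMeas_prob (hcap : MeasurableSet cap) (h0 : ω cap ≠ 0) (h1 : ω cap ≠ ⊤) :
    IsProbabilityMeasure (myCapMeas ω cap) := by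
  constructor
  rw [myCapMeas_eq hcap, Measure.smul_apply, Measure.restrict_apply MeasurableSet.univ,
    Set.univ_inter, smul_eq_mul, ENNReal.inv_mul_cancel h0 h1]

lemma myCapMeas_ae (hcap : MeasurableSet cap) : ∀ᵐ x ∂(myCapMeas ω cap), x ∈ cap := by
  rw [ae_iff, myCapMeas_eq hcap]
  have : {x | ¬ x ∈ cap} = capᶜ := rfl
  rw [this, Measure.smul_apply, Measure.restrict_apply hcap.compl, Set.compl_inter_self,
    measure_empty, smul_eq_mul, mul_zero]

lemma myCapMeas_ent [IsFiniteMeasure ω] (hcap : MeasurableSet cap) (h0 : ω cap ≠ 0)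
    (h1 : ω cap ≠ ⊤) :
    Ent ω (myCapMeas ω cap) = ((Real.log (((ω cap).toReal)⁻¹) : ℝ) : EReal) := by
  set μ := myCapMeas ω cap with hμ
  haveI : IsProbabilityMeasure μ := myCapMeas_prob hcap h0 h1
  have hac : μ ≪ ω := withDensity_absolutelyContinuous _ _
  have hf : Measurable (cap.indicator fun _ => (ω cap)⁻¹) :=
    Measurable.indicator measurable_const hcap
  have hrn : μ.rnDeriv ω =ᶠ[ae ω] cap.indicator fun _ => (ω cap)⁻¹ :=
    Measure.rnDeriv_withDensity ω hf
  have hrnμ : μ.rnDeriv ω =ᶠ[ae μ] cap.indicator fun _ => (ω cap)⁻¹ :=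
    hrn.filter_mono hac.ae_le
  have hsae := myCapMeas_ae (ω := ω) hcap
  have heq : (fun x => Real.log ((μ.rnDeriv ω x).toReal)) =ᶠ[ae μ]
      fun _ => Real.log (((ω cap).toReal)⁻¹) := by
    filter_upwards [hrnμ, hsae] with x hx hxs
    rw [hx, Set.indicator_of_mem hxs, ENNReal.toReal_inv]
  have hint : Integrable (fun x => Real.log ((μ.rnDeriv ω x).toReal)) μ :=
    (integrable_const _).congr heq.symm
  rw [Ent, if_pos ⟨hac, hint⟩]
  congr 1
  rw [integral_congr_ae heq, integral_const, probReal_univ, one_smul]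

lemma myIA_lb (lam : Fin d → ℝ) {μ : Measure (Sph d)} [IsProbabilityMeasure μ]
    {cap : Set (Sph d)} (hsae : ∀ᵐ x ∂μ, x ∈ cap) {b Mb : ℝ}
    (hb : ∀ x ∈ cap, ∀ y ∈ cap, b ≤ Kker lam x y)
    (hM : ∀ x y : Sph d, |Kker lam x y| ≤ Mb) :
    b ≤ IA lam μ := by
  have hKc := mycontinuous_Kker lam
  have hKint : ∀ x : Sph d, Integrable (fun y => Kker lam x y) μ := by
    intro x
    refine (integrable_const Mb).mono' ?_ ?_
    · exact (hKc.comp (Continuous.prodMk_right x)).aestronglyMeasurable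
    · exact ae_of_all _ fun y => by rw [Real.norm_eq_abs]; exact hM x y
  have hWm : StronglyMeasurable (fun x => ∫ y, Kker lam x y ∂μ) :=
    (hKc.stronglyMeasurable).integral_prod_right'
  have hWint : Integrable (fun x => ∫ y, Kker lam x y ∂μ) μ := by
    refine (integrable_const Mb).mono' hWm.aestronglyMeasurable (ae_of_all _ fun x => ?_)
    calc ‖∫ y, Kker lam x y ∂μ‖ ≤ Mb * (μ Set.univ).toReal :=
          norm_integral_le_of_norm_le_const
            (ae_of_all _ fun y => by rw [Real.norm_eq_abs]; exact hM x y)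
      _ = Mb := by simp
  have hW_lb : ∀ᵐ x ∂μ, b ≤ ∫ y, Kker lam x y ∂μ := by
    filter_upwards [hsae] with x hx
    have h5 : ∫ _y, b ∂μ ≤ ∫ y, Kker lam x y ∂μ := by
      apply integral_mono_ae (integrable_const b) (hKint x)
      filter_upwards [hsae] with y hy
      exact hb x hx y hy
    simpa using h5
  have h6 := integral_mono_ae (integrable_const b) hWint hW_lb
  simpa [IA] using h6

lemma myqA_cap {lam : Fin d → ℝ} {Λ r : ℝ} (hΛ0 : 0 ≤ Λ) (hΛ : ∀ i, |lam i| ≤ Λ)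
    (i0 : Fin d) (hlam0 : lam i0 = Λ)
    {x y : EuclideanSpace ℝ (Fin d)} (hyn : ‖y‖ = 1)
    (hx : ‖x - EuclideanSpace.single i0 1‖ ≤ r) (hy : ‖y - EuclideanSpace.single i0 1‖ ≤ r) :
    Λ - 2 * Λ * r ≤ qA lam x y := by
  set e1 : EuclideanSpace ℝ (Fin d) := EuclideanSpace.single i0 1 with he1
  have hsplit : qA lam x y - qA lam e1 y = qA lam (x - e1) y := by
    simp only [qA, PiLp.sub_apply]
    rw [← Finset.sum_sub_distrib]
    congr 1; ext i; ring
  have he1y : qA lam e1 y = Λ * y i0 := by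
    rw [qA, Finset.sum_eq_single i0]
    · rw [he1]
      simp [EuclideanSpace.single_apply, hlam0]
    · intro j _ hj
      rw [he1]
      simp [EuclideanSpace.single_apply, hj]
    · intro h; exact absurd (Finset.mem_univ i0) h
  have h1 : -(Λ * r) ≤ qA lam (x - e1) y := by
    have h2 := myabs_qA_le hΛ0 hΛ (x - e1) y
    rw [hyn, mul_one] at h2
    have h3 : |qA lam (x - e1) y| ≤ Λ * r := h2.trans (mul_le_mul_of_nonneg_left hx hΛ0)
    linarith [abs_le.mp h3]
  have h2 : 1 - r ≤ y i0 := by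
    have h4 := myabs_apply_le_norm (y - e1) i0
    have hyi : (y - e1) i0 = y i0 - 1 := by
      rw [PiLp.sub_apply, he1]
      simp [EuclideanSpace.single_apply]
    rw [hyi] at h4
    have := abs_le.mp (h4.trans hy)
    linarith
  have h5 : Λ * (1 - r) ≤ Λ * y i0 := mul_le_mul_of_nonneg_left h2 hΛ0
  have h6 : qA lam x y = qA lam (x - e1) y + Λ * y i0 := by
    rw [← he1y]; linarith [hsplit]
  rw [h6]
  nlinarith

end MyAux

open scoped ENNReal in
/-- upper bound on the minimal free energy `m_ε`. -/
theorem stmt11 (d : ℕ) (hd : 2 ≤ d) (lam : Fin d → ℝ)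
    (hanti : Antitone lam)
    (hgap : lam ⟨1, by omega⟩ < lam ⟨0, by omega⟩)
    (hpos : ∀ i, 0 < lam i)
    (ω : Measure (Sph d)) (hω : IsUniform ω) :
    ∃ C : ℝ, 0 < C ∧ ∃ ε₀ : ℝ, 0 < ε₀ ∧ ε₀ < 1 ∧ ∀ ε : ℝ, 0 < ε → ε < ε₀ →
      mEps lam ω ε ≤
        ((-(1 / 2) * Real.exp (lam ⟨0, by omega⟩) + C * ε * Real.log (1 / ε) : ℝ) : EReal) := by
  haveI := hω.1
  set i0 : Fin d := ⟨0, by omega⟩ with hi0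
  set Λ : ℝ := lam i0 with hΛdef
  have hΛpos : 0 < Λ := hpos i0
  have hΛb : ∀ i, |lam i| ≤ Λ := by
    intro i
    rw [abs_of_pos (hpos i)]
    exact hanti (show i0 ≤ i from Fin.mk_le_of_le_val (Nat.zero_le _))
  have he1mem : EuclideanSpace.single i0 (1:ℝ) ∈
      Metric.sphere (0 : EuclideanSpace ℝ (Fin d)) 1 := by
    rw [mem_sphere_zero_iff_norm, EuclideanSpace.norm_single]; norm_num
  set e1 : Sph d := ⟨EuclideanSpace.single i0 1, he1mem⟩ with he1
  have hdR : (2:ℝ) ≤ (d:ℝ) := by exact_mod_cast hd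
  have hlog5d : 0 < Real.log (5 * d) := Real.log_pos (by nlinarith)
  set C : ℝ := d * Real.log (5 * d) + d + Real.exp Λ * Λ + 1 with hC
  have hCpos : 0 < C := by
    have h1 : (0:ℝ) ≤ d := by positivity
    have h2 : (0:ℝ) < Real.exp Λ := Real.exp_pos _
    nlinarith
  refine ⟨C, hCpos, Real.exp (-1), Real.exp_pos _, ?_, ?_⟩
  · rw [Real.exp_lt_one_iff]; norm_num
  intro ε hε hεlt
  have hε1 : ε < 1 := lt_trans hεlt (by rw [Real.exp_lt_one_iff]; norm_num)
  -- the cap and its measure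
  set cap : Set (Sph d) := Metric.closedBall e1 ε with hcapdef
  have hcapm : MeasurableSet cap := Metric.isClosed_closedBall.measurableSet
  set N : ℕ := ⌈(d:ℝ)/ε⌉₊ with hNdef
  have hκle : ((((2*N+1)^d : ℕ) : ℝ≥0∞))⁻¹ ≤ ω cap := mycap_lb (by omega) hω e1 hε
  have h0 : ω cap ≠ 0 := by
    intro h
    rw [h, le_zero_iff] at hκle
    exact (ENNReal.inv_ne_zero.mpr (ENNReal.natCast_ne_top _)) hκle
  have h1 : ω cap ≠ ⊤ := measure_ne_top ω cap
  set μ := myCapMeas ω cap with hμdef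
  haveI hprob : IsProbabilityMeasure μ := myCapMeas_prob hcapm h0 h1
  set m : ℝ := (ω cap).toReal with hmdef
  have hcard0 : (0:ℝ) < (((2*N+1)^d : ℕ) : ℝ) := by positivity
  have hκR : ((((2*N+1)^d : ℕ)) : ℝ)⁻¹ ≤ m := by
    have h2 := ENNReal.toReal_mono h1 hκle
    rw [ENNReal.toReal_inv, ENNReal.toReal_natCast] at h2
    exact h2
  have hm0 : 0 < m := lt_of_lt_of_le (by positivity) hκR
  have hent := myCapMeas_ent (ω := ω) hcapm h0 h1
  -- kernel bounds
  have hmemball : ∀ x : Sph d, x ∈ cap →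
      ‖(x : EuclideanSpace ℝ (Fin d)) - EuclideanSpace.single i0 1‖ ≤ ε := by
    intro x hx
    rw [hcapdef, Metric.mem_closedBall, Subtype.dist_eq, dist_eq_norm] at hx
    exact hx
  have hKlb : ∀ x ∈ cap, ∀ y ∈ cap, Real.exp (Λ - 2*Λ*ε) ≤ Kker lam x y := by
    intro x hx y hy
    rw [Kker]
    apply Real.exp_le_exp.mpr
    have hyn : ‖(y : EuclideanSpace ℝ (Fin d))‖ = 1 := by
      have := y.2; rwa [mem_sphere_zero_iff_norm] at this
    exact myqA_cap hΛpos.le hΛb i0 rfl hyn (hmemball x hx) (hmemball y hy)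
  have hKub : ∀ x y : Sph d, |Kker lam x y| ≤ Real.exp Λ := by
    intro x y
    rw [Kker, abs_of_pos (Real.exp_pos _)]
    apply Real.exp_le_exp.mpr
    have hxn : ‖(x : EuclideanSpace ℝ (Fin d))‖ = 1 := by
      have := x.2; rwa [mem_sphere_zero_iff_norm] at this
    have hyn : ‖(y : EuclideanSpace ℝ (Fin d))‖ = 1 := by
      have := y.2; rwa [mem_sphere_zero_iff_norm] at this
    have h3 := myabs_qA_le hΛpos.le hΛb (x : EuclideanSpace ℝ (Fin d)) y
    rw [hxn, hyn] at h3
    simpa using (abs_le.mp (by simpa using h3)).2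
  have hIA : Real.exp (Λ - 2*Λ*ε) ≤ IA lam μ :=
    myIA_lb lam (myCapMeas_ae hcapm) hKlb hKub
  -- the free energy value
  have hEA : EA lam ω ε μ = ((ε * Real.log m⁻¹ - IA lam μ / 2 : ℝ) : EReal) := by
    rw [EA, hent, ← EReal.coe_mul, ← EReal.coe_sub]
  -- real estimate
  set L : ℝ := Real.log (1/ε) with hLdef
  have hL1 : 1 ≤ L := by
    rw [hLdef, one_div, Real.le_log_iff_exp_le (by positivity)]
    rw [show Real.exp 1 = (Real.exp (-1))⁻¹ by rw [← Real.exp_neg]; norm_num]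
    exact (inv_anti₀ hε hεlt.le : _)
  have hN1 : ((2*N+1 : ℕ) : ℝ) ≤ 5*d/ε := by
    have h4 : (N:ℝ) < (d:ℝ)/ε + 1 := Nat.ceil_lt_add_one (by positivity)
    have h5 : (1:ℝ) ≤ (d:ℝ)/ε := by
      rw [le_div_iff₀ hε]
      nlinarith
    push_cast
    rw [mul_div_assoc]
    linarith
  have hlogm : Real.log m⁻¹ ≤ (d:ℝ) * (Real.log (5*d) + L) := by
    have h6 : Real.log ((((2*N+1)^d : ℕ)) : ℝ)⁻¹ ≤ Real.log m :=
      Real.log_le_log (by positivity) hκR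
    have h7 : Real.log m⁻¹ ≤ Real.log ((((2*N+1)^d : ℕ)) : ℝ) := by
      rw [Real.log_inv] at h6 ⊢
      linarith
    refine h7.trans ?_
    push_cast
    rw [Real.log_pow]
    have h8 : Real.log ((2*N+1 : ℕ) : ℝ) ≤ Real.log (5*d) + L := by
      have h9 : Real.log ((2*N+1 : ℕ) : ℝ) ≤ Real.log (5*d/ε) :=
        Real.log_le_log (by positivity) hN1
      rw [show (5*(d:ℝ)/ε) = 5*d * (1/ε) by ring, Real.log_mul (by positivity) (by positivity)]
        at h9
      exact h9
    push_cast at h8 ⊢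
    exact mul_le_mul_of_nonneg_left h8 (by positivity)
  have hexp : Real.exp Λ * (1 - 2*Λ*ε) ≤ Real.exp (Λ - 2*Λ*ε) := by
    rw [show Λ - 2*Λ*ε = Λ + (-(2*Λ*ε)) by ring, Real.exp_add]
    have h10 : (-(2*Λ*ε)) + 1 ≤ Real.exp (-(2*Λ*ε)) := Real.add_one_le_exp _
    have := Real.exp_pos Λ
    nlinarith
  have hreal : ε * Real.log m⁻¹ - IA lam μ / 2 ≤ -(1/2) * Real.exp Λ + C * ε * L := by
    have h11 : ε * Real.log m⁻¹ ≤ ε * ((d:ℝ) * (Real.log (5*d) + L)) :=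
      mul_le_mul_of_nonneg_left hlogm hε.le
    have h12 : Real.exp Λ * (1 - 2*Λ*ε) ≤ IA lam μ := hexp.trans hIA
    have hεL : ε ≤ ε * L := by nlinarith
    have hE := Real.exp_pos Λ
    have hA : (0:ℝ) ≤ ((d:ℝ) * Real.log (5*d)) * (ε*L - ε) :=
      mul_nonneg (mul_nonneg (by positivity) hlog5d.le) (by linarith)
    have hB : (0:ℝ) ≤ (Real.exp Λ * Λ) * (ε*L - ε) :=
      mul_nonneg (mul_nonneg hE.le hΛpos.le) (by linarith)
    have hCc : (0:ℝ) ≤ ε * L := le_trans hε.le hεL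
    have key : ε*((d:ℝ)*(Real.log (5*d)+L)) - Real.exp Λ*(1-2*Λ*ε)/2 ≤
        -(1/2) * Real.exp Λ + ((d:ℝ)*Real.log (5*d) + d + Real.exp Λ*Λ + 1)*ε*L := by
      linarith [hA, hB, hCc]
    rw [hC]
    linarith [h11, h12, key]
  calc mEps lam ω ε ≤ EA lam ω ε μ := sInf_le ⟨μ, hprob, rfl⟩
    _ = ((ε * Real.log m⁻¹ - IA lam μ / 2 : ℝ) : EReal) := hEA
    _ ≤ _ := EReal.coe_le_coe_iff.mpr hreal

end
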